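/- Let ψ : ℝ → ℂ be a Schwartz function, let (a_k)_{k∈ℕ} be complex numbers with Σ_k |a_k| < ∞, and let (μ_k)_{k∈ℕ} be strictly positive real numbers. Define g(t) := Σ_k a_k e^{−i μ_k t}. Then for every natural number N there exists a constant C such that for all real λ ≤ 0, |∫_ℝ e^{i t λ} ψ(t) g(t) dt| ≤ C (1 + |λ|)^{−N}. -/

import Mathlib

open MeasureTheory Real FourierTransform

/-- Let `ψ` be a Schwartz function, `Σ_k |a_k| < ∞`, `μ_k > 0`, and
`g(t) = Σ_k a_k e^{−iμ_k t}`. Then for every `N` there is `C` such that for all `λ ≤ 0`,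
`|∫ e^{itλ} ψ(t) g(t) dt| ≤ C (1 + |λ|)^{−N}`. -/
theorem stmt14 (ψ : SchwartzMap ℝ ℂ) (a : ℕ → ℂ) (ha : Summable (fun k => ‖a k‖))
    (μ : ℕ → ℝ) (hμ : ∀ k, 0 < μ k) :
    ∀ N : ℕ, ∃ C : ℝ, ∀ l : ℝ, l ≤ 0 →
      ‖∫ t : ℝ, Complex.exp (Complex.I * t * l) * ψ t *
          (∑' k : ℕ, a k * Complex.exp (-Complex.I * μ k * t))‖ ≤
        C / (1 + |l|) ^ N := by
  intro N
  set F : SchwartzMap ℝ ℂ := SchwartzMap.fourierTransformCLM ℂ ψ with hFdef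
  obtain ⟨D, hD0, hFdecay⟩ : ∃ D, 0 ≤ D ∧ ∀ x : ℝ, (1 + |x|) ^ N * ‖F x‖ ≤ D := by
    refine ⟨2 ^ N * (Finset.Iic (N, 0)).sup (fun m => SchwartzMap.seminorm ℝ m.1 m.2) F, ?_, ?_⟩
    · positivity
    · intro x
      have h := SchwartzMap.one_add_le_sup_seminorm_apply (𝕜 := ℝ) (m := (N, 0))
        le_rfl le_rfl F x
      simpa [Real.norm_eq_abs, norm_iteratedFDeriv_zero] using h
  refine ⟨(∑' k, ‖a k‖) * ((2 * π) ^ N * D), fun l hl => ?_⟩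
  have hπ : (1 : ℝ) ≤ 2 * π := by nlinarith [Real.pi_gt_three]
  have hπ0 : (0 : ℝ) < 2 * π := by linarith
  set w : ℕ → ℝ := fun k => (μ k - l) / (2 * π) with hwdef
  have hw2 : ∀ k, 2 * π * w k = μ k - l := fun k => by
    simp only [hwdef]
    field_simp
  have hwpos : ∀ k, 0 < w k := fun k => by
    have : 0 < μ k - l := by linarith [hμ k]
    exact div_pos this hπ0
  set f : ℕ → ℝ → ℂ := fun k t =>
    a k • (Complex.exp (↑(-2 * π * t * w k) * Complex.I) • ψ t) with hfdef
  have hnorm : ∀ k t, ‖f k t‖ = ‖a k‖ * ‖ψ t‖ := by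
    intro k t
    simp only [hfdef, norm_smul, Complex.norm_exp_ofReal_mul_I, one_mul]
  have hint : ∀ k, Integrable (f k) := by
    intro k
    have hc : Continuous (f k) := by
      simp only [hfdef]
      refine Continuous.smul (f := fun _ : ℝ => a k) continuous_const ?_
      exact (Complex.continuous_exp.comp (by continuity)).smul ψ.continuous
    refine (ψ.integrable.norm.const_mul ‖a k‖).mono' hc.aestronglyMeasurable ?_
    filter_upwards with t
    rw [hnorm]
  have hsumint : Summable fun k => ∫ t, ‖f k t‖ := by
    simp_rw [hnorm]
    simpa [integral_const_mul] using ha.mul_right (∫ t, ‖ψ t‖)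
  have hS := hasSum_integral_of_summable_integral_norm (μ := volume) hint hsumint
  have hpt : ∀ t : ℝ, Complex.exp (Complex.I * t * l) * ψ t *
      (∑' k : ℕ, a k * Complex.exp (-Complex.I * μ k * t)) = ∑' k, f k t := by
    intro t
    rw [← tsum_mul_left]
    refine tsum_congr fun k => ?_
    have harg : (↑(-2 * π * t * w k) * Complex.I : ℂ)
        = Complex.I * t * l + -Complex.I * μ k * t := by
      have : (-2 * π * t * w k : ℝ) = t * l - t * μ k := by
        linear_combination (-t) * hw2 k
      rw [this]
      push_cast
      ring
    rw [hfdef]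
    simp only [smul_eq_mul, harg, Complex.exp_add]
    ring
  have hIeq : (∫ t : ℝ, Complex.exp (Complex.I * t * l) * ψ t *
      (∑' k : ℕ, a k * Complex.exp (-Complex.I * μ k * t)))
      = ∫ t : ℝ, ∑' k, f k t := by
    exact integral_congr_ae (Filter.Eventually.of_forall hpt)
  rw [hIeq, ← hS.tsum_eq]
  have hP0 : (0 : ℝ) < (1 + |l|) ^ N := by positivity
  have hterm : ∀ k, ‖∫ t, f k t‖ ≤ ‖a k‖ * ((2 * π) ^ N * D / (1 + |l|) ^ N) := by
    intro k
    have hFk : (∫ t, f k t) = a k • F (w k) := by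
      rw [hfdef]
      simp only [integral_smul]
      congr 1
      rw [hFdef]
      rw [SchwartzMap.fourierTransformCLM_apply]
      rw [SchwartzMap.fourier_coe, Real.fourier_real_eq_integral_exp_smul]
    rw [hFk, norm_smul]
    refine mul_le_mul_of_nonneg_left ?_ (norm_nonneg _)
    rw [le_div_iff₀ hP0]
    have h1 : 1 + |l| ≤ 2 * π * (1 + |w k|) := by
      have hab : |l| = -l := abs_of_nonpos hl
      have hwab : |w k| = w k := abs_of_pos (hwpos k)
      have := hw2 k
      have := hμ k
      nlinarith
    have h2 : (1 + |l|) ^ N ≤ (2 * π) ^ N * (1 + |w k|) ^ N := by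
      rw [← mul_pow]
      exact pow_le_pow_left₀ (by positivity) h1 N
    calc ‖F (w k)‖ * (1 + |l|) ^ N
        ≤ ‖F (w k)‖ * ((2 * π) ^ N * (1 + |w k|) ^ N) :=
          mul_le_mul_of_nonneg_left h2 (norm_nonneg _)
      _ = (2 * π) ^ N * ((1 + |w k|) ^ N * ‖F (w k)‖) := by ring
      _ ≤ (2 * π) ^ N * D := by
          exact mul_le_mul_of_nonneg_left (hFdecay (w k)) (by positivity)
  have hg : HasSum (fun k => ‖a k‖ * ((2 * π) ^ N * D / (1 + |l|) ^ N))
      ((∑' k, ‖a k‖) * ((2 * π) ^ N * D) / (1 + |l|) ^ N) := by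
    have := ha.hasSum.mul_right ((2 * π) ^ N * D / (1 + |l|) ^ N)
    rwa [← mul_div_assoc] at this
  exact tsum_of_norm_bounded hg hterm
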